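/- For every integer n ≥ 2, every maximal admissible subset of V_n has exactly n − 1 elements, and the number of maximal admissible subsets of V_n equals the binomial coefficient C(2n−2, n−1). -/

import Mathlib

set_option maxHeartbeats 1000000


/-- Membership in `V_n = {(a,b) : 1 ≤ a,b ≤ n, a ≠ b}`. -/
def VnMem (n : ℕ) (p : ℕ × ℕ) : Prop :=
  1 ≤ p.1 ∧ p.1 ≤ n ∧ 1 ≤ p.2 ∧ p.2 ≤ n ∧ p.1 ≠ p.2

/-- A subset `S ⊆ V_n` is admissible if for all `1 ≤ i < h ≤ n` and
`1 ≤ j < k ≤ n`: (1) whenever `i = j` or `h = k`, not both `(i,k)` and `(h,j)`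
lie in `S`; and (2) whenever `i ≠ j` and `h ≠ k`, not both `(i,j)` and `(h,k)`
lie in `S`. -/
def SegreAdmissible (n : ℕ) (S : Finset (ℕ × ℕ)) : Prop :=
  (∀ p ∈ S, VnMem n p) ∧
  ∀ i h j k : ℕ, 1 ≤ i → i < h → h ≤ n → 1 ≤ j → j < k → k ≤ n →
    ((i = j ∨ h = k) → ¬((i, k) ∈ S ∧ (h, j) ∈ S)) ∧
    ((i ≠ j ∧ h ≠ k) → ¬((i, j) ∈ S ∧ (h, k) ∈ S))

/-- A maximal admissible subset of `V_n`. -/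
def MaxSegreAdmissible (n : ℕ) (S : Finset (ℕ × ℕ)) : Prop :=
  SegreAdmissible n S ∧ ∀ T, SegreAdmissible n T → S ⊆ T → S = T

namespace SegreAux

def compat (p q : ℕ × ℕ) : Prop :=
  p.1 = q.1 ∨ p.2 = q.2 ∨
    (p.1 < q.1 ∧ q.2 < p.2 ∧ p.1 ≠ q.2 ∧ p.2 ≠ q.1) ∨
    (q.1 < p.1 ∧ p.2 < q.2 ∧ q.1 ≠ p.2 ∧ q.2 ≠ p.1)

lemma compat_symm {p q : ℕ × ℕ} (h : compat p q) : compat q p := by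
  unfold compat at *; tauto

def good (n : ℕ) (S : Finset (ℕ × ℕ)) : Prop :=
  (∀ p ∈ S, VnMem n p) ∧ ∀ p ∈ S, ∀ q ∈ S, compat p q

theorem adm_iff (n : ℕ) (S : Finset (ℕ × ℕ)) :
    SegreAdmissible n S ↔ good n S := by
  constructor
  · rintro ⟨h1, h2⟩
    refine ⟨h1, ?_⟩
    have key : ∀ p ∈ S, ∀ q ∈ S, p.1 < q.1 → p.2 ≠ q.2 →
        q.2 < p.2 ∧ p.1 ≠ q.2 ∧ p.2 ≠ q.1 := by
      intro p hp q hq hlt hne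
      obtain ⟨hp1, hp2, hp3, hp4, hp5⟩ := h1 p hp
      obtain ⟨hq1, hq2, hq3, hq4, hq5⟩ := h1 q hq
      have hnlt : ¬ p.2 < q.2 := by
        intro hlt2
        exact (h2 p.1 q.1 p.2 q.2 hp1 hlt hq2 hp3 hlt2 hq4).2 ⟨hp5, hq5⟩ ⟨hp, hq⟩
      have hgt : q.2 < p.2 := by omega
      have hne2 : ¬(p.1 = q.2 ∨ q.1 = p.2) := by
        intro hor
        exact (h2 p.1 q.1 q.2 p.2 hp1 hlt hq2 hq3 hgt hp4).1 hor ⟨hp, hq⟩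
      push_neg at hne2
      exact ⟨hgt, hne2.1, fun h => hne2.2 h.symm⟩
    intro p hp q hq
    by_cases h11 : p.1 = q.1
    · exact Or.inl h11
    by_cases h22 : p.2 = q.2
    · exact Or.inr (Or.inl h22)
    rcases lt_or_gt_of_ne h11 with hlt | hgt
    · obtain ⟨a, b, c⟩ := key p hp q hq hlt h22
      exact Or.inr (Or.inr (Or.inl ⟨hlt, a, b, c⟩))
    · obtain ⟨a, b, c⟩ := key q hq p hp hgt (Ne.symm h22)
      exact Or.inr (Or.inr (Or.inr ⟨hgt, a, b, c⟩))
  · rintro ⟨h1, h2⟩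
    refine ⟨h1, ?_⟩
    intro i h j k hi hih hhn hj hjk hkn
    constructor
    · rintro hor ⟨hik, hhj⟩
      have := h2 _ hik _ hhj
      rcases this with e | e | ⟨l1, l2, l3, l4⟩ | ⟨l1, l2, l3, l4⟩ <;>
        simp only [] at * <;> omega
    · rintro ⟨hij, hhk⟩ ⟨hS1, hS2⟩
      have := h2 _ hS1 _ hS2
      rcases this with e | e | ⟨l1, l2, l3, l4⟩ | ⟨l1, l2, l3, l4⟩ <;>
        simp only [] at * <;> omega

variable {n : ℕ} {S : Finset (ℕ × ℕ)}

lemma good.vn (hg : good n S) {p : ℕ × ℕ} (hp : p ∈ S) : VnMem n p := hg.1 p hp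

lemma good.rc_ne (hg : good n S) {p q : ℕ × ℕ} (hp : p ∈ S) (hq : q ∈ S) :
    p.1 ≠ q.2 := by
  intro he
  have h5p := (hg.1 p hp).2.2.2.2
  have h5q := (hg.1 q hq).2.2.2.2
  rcases hg.2 p hp q hq with e | e | ⟨_, _, h3, _⟩ | ⟨_, _, _, h3⟩
  · exact h5q (e.symm.trans he)
  · exact h5p (he.trans e.symm)
  · exact h3 he
  · exact h3 he.symm

lemma good.col_le (hg : good n S) {p q : ℕ × ℕ} (hp : p ∈ S) (hq : q ∈ S)
    (h : p.1 < q.1) : q.2 ≤ p.2 := by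
  rcases hg.2 p hp q hq with e | e | ⟨_, h2, _, _⟩ | ⟨h1, _, _, _⟩
  · omega
  · omega
  · omega
  · omega

open scoped Classical in
noncomputable def tag (S : Finset (ℕ × ℕ)) (p : ℕ × ℕ) : ℕ :=
  if ∀ q ∈ S, q.1 = p.1 → q.2 ≤ p.2 then p.1 else p.2

/-- the largest column value used by `S` -/
noncomputable def topCol (S : Finset (ℕ × ℕ)) (hne : S.Nonempty) : ℕ :=
  (S.image Prod.snd).max' (hne.image _)

lemma topCol_mem (hne : S.Nonempty) :
    ∃ q ∈ S, q.2 = topCol S hne := by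
  have := (S.image Prod.snd).max'_mem (hne.image _)
  simpa [topCol, Finset.mem_image] using this

lemma le_topCol (hne : S.Nonempty) {q : ℕ × ℕ} (hq : q ∈ S) :
    q.2 ≤ topCol S hne :=
  Finset.le_max' _ _ (Finset.mem_image_of_mem _ hq)

lemma good.tag_mem (hg : good n S) (hne : S.Nonempty) {p : ℕ × ℕ} (hp : p ∈ S) :
    tag S p ∈ (Finset.Icc 1 n).erase (topCol S hne) := by
  obtain ⟨q0, hq0, hq0e⟩ := topCol_mem hne
  rw [Finset.mem_erase, Finset.mem_Icc]
  unfold tag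
  split_ifs with hmax
  · refine ⟨?_, (hg.vn hp).1, (hg.vn hp).2.1⟩
    rw [← hq0e]
    exact hg.rc_ne hp hq0
  · push_neg at hmax
    obtain ⟨q, hq, hq1, hq2⟩ := hmax
    refine ⟨?_, (hg.vn hp).2.2.1, (hg.vn hp).2.2.2.1⟩
    have := le_topCol hne hq
    omega

lemma good.tag_notmax (hg : good n S) {p q : ℕ × ℕ} (hp : p ∈ S) (hq : q ∈ S)
    (hnm : ¬ ∀ q' ∈ S, q'.1 = q.1 → q'.2 ≤ q.2) (h22 : p.2 = q.2)
    (h11 : p.1 < q.1) : False := by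
  push_neg at hnm
  obtain ⟨q', hq', hq'1, hq'2⟩ := hnm
  have h1 : p.1 < q'.1 := by omega
  have := hg.col_le hp hq' h1
  omega

lemma good.tag_inj (hg : good n S) : Set.InjOn (tag S) S := by
  intro p hp q hq he
  unfold tag at he
  by_cases h1 : ∀ q' ∈ S, q'.1 = p.1 → q'.2 ≤ p.2 <;>
    by_cases h2 : ∀ q' ∈ S, q'.1 = q.1 → q'.2 ≤ q.2
  · rw [if_pos h1, if_pos h2] at he
    have e1 := h1 q hq he.symm
    have e2 := h2 p hp he
    exact Prod.ext he (by omega)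
  · rw [if_pos h1, if_neg h2] at he
    exact absurd he (hg.rc_ne hp hq)
  · rw [if_neg h1, if_pos h2] at he
    exact absurd he.symm (hg.rc_ne hq hp)
  · rw [if_neg h1, if_neg h2] at he
    by_cases h11 : p.1 = q.1
    · exact Prod.ext h11 he
    rcases lt_or_gt_of_ne h11 with hlt | hgt
    · exact (hg.tag_notmax hp hq h2 he hlt).elim
    · exact (hg.tag_notmax hq hp h1 he.symm hgt).elim

lemma good.card_le (hg : good n S) (hn : 2 ≤ n) : S.card ≤ n - 1 := by
  rcases S.eq_empty_or_nonempty with rfl | hne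
  · simp
  have h1 := Finset.card_le_card_of_injOn (tag S)
      (fun p hp => hg.tag_mem hne hp) (hg.tag_inj)
  have h2 : topCol S hne ∈ Finset.Icc 1 n := by
    obtain ⟨q, hq, hqe⟩ := topCol_mem hne
    rw [Finset.mem_Icc, ← hqe]
    exact ⟨(hg.vn hq).2.2.1, (hg.vn hq).2.2.2.1⟩
  rw [Finset.card_erase_of_mem h2, Nat.card_Icc] at h1
  omega

lemma good.cover (hg : good n S) (hn : 2 ≤ n) (hcard : S.card = n - 1)
    {x : ℕ} (hx1 : 1 ≤ x) (hxn : x ≤ n) :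
    x ∈ S.image Prod.fst ∨ x ∈ S.image Prod.snd := by
  have hne : S.Nonempty := by
    rw [← Finset.card_pos, hcard]; omega
  obtain ⟨q0, hq0, hq0e⟩ := topCol_mem hne
  by_cases hx : x = topCol S hne
  · exact Or.inr (by rw [hx, ← hq0e]; exact Finset.mem_image_of_mem _ hq0)
  -- x is in the image of tag
  have himg : S.image (tag S) = (Finset.Icc 1 n).erase (topCol S hne) := by
    apply Finset.eq_of_subset_of_card_le
    · intro y hy
      obtain ⟨p, hp, rfl⟩ := Finset.mem_image.1 hy
      exact hg.tag_mem hne hp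
    · rw [Finset.card_image_of_injOn hg.tag_inj, hcard,
        Finset.card_erase_of_mem, Nat.card_Icc]
      · omega
      · obtain ⟨q, hq, hqe⟩ := topCol_mem hne
        rw [Finset.mem_Icc, ← hqe]
        exact ⟨(hg.vn hq).2.2.1, (hg.vn hq).2.2.2.1⟩
  have hxm : x ∈ S.image (tag S) := by
    rw [himg, Finset.mem_erase, Finset.mem_Icc]
    exact ⟨hx, hx1, hxn⟩
  obtain ⟨p, hp, hpe⟩ := Finset.mem_image.1 hxm
  unfold tag at hpe
  split_ifs at hpe
  · exact Or.inl (hpe ▸ Finset.mem_image_of_mem _ hp)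
  · exact Or.inr (hpe ▸ Finset.mem_image_of_mem _ hp)

end SegreAux

namespace SegreAux

variable {n : ℕ} {S : Finset (ℕ × ℕ)}

lemma compat_refl (p : ℕ × ℕ) : compat p p := Or.inl rfl

lemma good.insert_good (hg : good n S) {v : ℕ × ℕ} (hv : VnMem n v)
    (hc : ∀ p ∈ S, compat v p) : good n (insert v S) := by
  constructor
  · intro p hp
    rcases Finset.mem_insert.1 hp with h | h
    · exact h ▸ hv
    · exact hg.vn h
  · intro p hp q hq
    rcases Finset.mem_insert.1 hp with h | h <;>
      rcases Finset.mem_insert.1 hq with h' | h'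
    · rw [h, h']; exact compat_refl v
    · rw [h]; exact hc q h'
    · rw [h']; exact compat_symm (hc p h)
    · exact hg.2 p h q h'

def colsOfRow (S : Finset (ℕ × ℕ)) (x : ℕ) : Finset ℕ :=
  (S.filter (fun p => p.1 = x)).image Prod.snd

def rowsOfCol (S : Finset (ℕ × ℕ)) (x : ℕ) : Finset ℕ :=
  (S.filter (fun p => p.2 = x)).image Prod.fst

lemma mem_colsOfRow {x y : ℕ} : y ∈ colsOfRow S x ↔ (x, y) ∈ S := by
  simp only [colsOfRow, Finset.mem_image, Finset.mem_filter]
  constructor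
  · rintro ⟨p, ⟨hp, h⟩, h'⟩
    have : p = (x, y) := Prod.ext h h'
    exact this ▸ hp
  · intro h
    exact ⟨(x, y), ⟨h, rfl⟩, rfl⟩

lemma mem_rowsOfCol {x y : ℕ} : y ∈ rowsOfCol S x ↔ (y, x) ∈ S := by
  simp only [rowsOfCol, Finset.mem_image, Finset.mem_filter]
  constructor
  · rintro ⟨p, ⟨hp, h⟩, h'⟩
    have : p = (y, x) := Prod.ext h' h
    exact this ▸ hp
  · intro h
    exact ⟨(y, x), ⟨h, rfl⟩, rfl⟩

noncomputable def cmax (S : Finset (ℕ × ℕ)) (x : ℕ) : ℕ :=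
  if h : (colsOfRow S x).Nonempty then (colsOfRow S x).max' h else 0

noncomputable def rmin (S : Finset (ℕ × ℕ)) (x : ℕ) : ℕ :=
  if h : (rowsOfCol S x).Nonempty then (rowsOfCol S x).min' h else 0

lemma cmax_mem {x : ℕ} (h : x ∈ S.image Prod.fst) : (x, cmax S x) ∈ S := by
  obtain ⟨p, hp, he⟩ := Finset.mem_image.1 h
  have hne : (colsOfRow S x).Nonempty := ⟨p.2, mem_colsOfRow.2 (by
    have : p = (x, p.2) := Prod.ext he rfl
    exact this ▸ hp)⟩
  rw [cmax, dif_pos hne, ← mem_colsOfRow]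
  exact (colsOfRow S x).max'_mem hne

lemma le_cmax {x y : ℕ} (h : (x, y) ∈ S) : y ≤ cmax S x := by
  have hne : (colsOfRow S x).Nonempty := ⟨y, mem_colsOfRow.2 h⟩
  rw [cmax, dif_pos hne]
  exact Finset.le_max' _ _ (mem_colsOfRow.2 h)

lemma rmin_mem {x : ℕ} (h : x ∈ S.image Prod.snd) : (rmin S x, x) ∈ S := by
  obtain ⟨p, hp, he⟩ := Finset.mem_image.1 h
  have hne : (rowsOfCol S x).Nonempty := ⟨p.1, mem_rowsOfCol.2 (by
    have : p = (p.1, x) := Prod.ext rfl he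
    exact this ▸ hp)⟩
  rw [rmin, dif_pos hne, ← mem_rowsOfCol]
  exact (rowsOfCol S x).min'_mem hne

lemma rmin_le {x y : ℕ} (h : (y, x) ∈ S) : rmin S x ≤ y := by
  have hne : (rowsOfCol S x).Nonempty := ⟨y, mem_rowsOfCol.2 h⟩
  rw [rmin, dif_pos hne]
  exact Finset.min'_le _ _ (mem_rowsOfCol.2 h)

lemma vn_mk {a b : ℕ} (h1 : 1 ≤ a) (h2 : a ≤ n) (h3 : 1 ≤ b) (h4 : b ≤ n)
    (h5 : a ≠ b) : VnMem n (a, b) := ⟨h1, h2, h3, h4, h5⟩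

lemma compat_mk_left {a b : ℕ} {p : ℕ × ℕ}
    (h : a = p.1 ∨ b = p.2 ∨ (a < p.1 ∧ p.2 < b ∧ a ≠ p.2 ∧ b ≠ p.1) ∨
      (p.1 < a ∧ b < p.2 ∧ p.1 ≠ b ∧ p.2 ≠ a)) : compat (a, b) p := h

lemma good.exists_insert (hg : good n S) (hn : 2 ≤ n) (hcard : S.card < n - 1) :
    ∃ v, v ∉ S ∧ good n (insert v S) := by
  by_contra hcon
  push_neg at hcon
  have key : ∀ v, VnMem n v → (∀ p ∈ S, compat v p) → v ∈ S := by
    intro v hv hc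
    by_contra hvS
    exact hcon v hvS (hg.insert_good hv hc)
  rcases S.eq_empty_or_nonempty with rfl | hne
  · have : ((1 : ℕ), (2 : ℕ)) ∈ (∅ : Finset (ℕ × ℕ)) := by
      apply key
      · exact vn_mk (le_refl 1) (by omega) (by omega) hn (by omega)
      · intro p hp
        simp at hp
    simp at this
  by_cases hcov : ∀ x, 1 ≤ x → x ≤ n → x ∈ S.image Prod.fst ∨ x ∈ S.image Prod.snd
  · -- every value is used
    by_cases hgap : ∃ a ∈ S.image Prod.fst, ∃ q ∈ S, q.1 < a ∧
        (∀ p ∈ S, p.1 < a → q.2 ≤ p.2) ∧ (∀ p ∈ S, p.1 = a → p.2 < q.2)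
    · -- there is a gap: insert (a, q.2)
      obtain ⟨a, haR, q, hq, hqa, hqmin, hqgt⟩ := hgap
      obtain ⟨p0, hp0, hp0e⟩ := Finset.mem_image.1 haR
      have hne1 := hg.rc_ne hp0 hq   -- p0.1 ≠ q.2, i.e. a ≠ q.2
      have hb1 := (hg.vn hp0).1
      have hb2 := (hg.vn hp0).2.1
      have hb3 := (hg.vn hq).2.2.1
      have hb4 := (hg.vn hq).2.2.2.1
      have hvn : VnMem n (a, q.2) := vn_mk (by omega) (by omega) hb3 hb4 (by omega)
      have hcmp : ∀ p ∈ S, compat (a, q.2) p := by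
        intro p hp
        apply compat_mk_left
        have hr1 := hg.rc_ne hp hq    -- p.1 ≠ q.2
        have hr2 := hg.rc_ne hp0 hp   -- a ≠ p.2
        rcases lt_trichotomy p.1 a with h1 | h1 | h1
        · have hle : q.2 ≤ p.2 := hqmin p hp h1
          omega
        · omega
        · have h2 : p.2 < q.2 := by
            have ha1 : p0.1 < p.1 := by omega
            have hc1 := hg.col_le hp0 hp ha1
            have hc2 := hqgt p0 hp0 hp0e
            omega
          omega
      have hmem := key (a, q.2) hvn hcmp
      have := hqgt _ hmem rfl
      simp only [] at this
      omega
    · -- no gap: injection shows S.card ≥ n - 1, contradiction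
      push_neg at hgap
      have hRSne : (S.image Prod.fst).Nonempty := hne.image _
      obtain ⟨pa, hpa, hpae⟩ := Finset.mem_image.1 ((S.image Prod.fst).min'_mem hRSne)
      have haux : ∀ z w, (S.image Prod.fst).min' hRSne < z → z ≤ n →
          z ∈ S.image Prod.fst → w ∉ S.image Prod.fst →
          z = rmin S w → w = cmax S z → False := by
        intro z w hz0 hzn hzR hwR hzw hwz
        have hFne : ((S.filter (fun p => p.1 < z)).image Prod.snd).Nonempty := by
          refine ⟨pa.2, Finset.mem_image_of_mem _ ?_⟩
          rw [Finset.mem_filter]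
          exact ⟨hpa, by omega⟩
        obtain ⟨q, hq', hqe⟩ := Finset.mem_image.1
          (((S.filter (fun p => p.1 < z)).image Prod.snd).min'_mem hFne)
        rw [Finset.mem_filter] at hq'
        obtain ⟨hq, hq1⟩ := hq'
        have hqmin : ∀ p ∈ S, p.1 < z → q.2 ≤ p.2 := by
          intro p hp hpz
          rw [hqe]
          refine Finset.min'_le _ _ (Finset.mem_image_of_mem _ ?_)
          rw [Finset.mem_filter]
          exact ⟨hp, hpz⟩
        obtain ⟨p, hp, hp1, hple⟩ := hgap z hzR q hq hq1 hqmin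
        have hpw : p.2 ≤ w := by
          rw [hwz]
          apply le_cmax
          rw [← hp1]
          exact hp
        have hzwS : (z, w) ∈ S := hwz ▸ cmax_mem hzR
        have hwq : w ≤ q.2 := by
          have := hg.col_le hq hzwS (by simp only []; omega)
          simpa using this
        have hrm : rmin S w ≤ q.1 := by
          apply rmin_le
          have : q.2 = w := by omega
          rw [← this]
          exact hq
        omega
      have hmaps : ∀ z ∈ (Finset.Icc 1 n).erase ((S.image Prod.fst).min' hRSne),
          (if z ∈ S.image Prod.fst then (z, cmax S z) else (rmin S z, z)) ∈ S := by
        intro z hz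
        rw [Finset.mem_erase, Finset.mem_Icc] at hz
        by_cases hzR : z ∈ S.image Prod.fst
        · rw [if_pos hzR]; exact cmax_mem hzR
        · rw [if_neg hzR]
          apply rmin_mem
          rcases hcov z hz.2.1 hz.2.2 with h | h
          · exact absurd h hzR
          · exact h
      have hinj : Set.InjOn (fun z => if z ∈ S.image Prod.fst then (z, cmax S z)
          else (rmin S z, z)) ((Finset.Icc 1 n).erase ((S.image Prod.fst).min' hRSne)) := by
        intro z hz w hw he
        have hz' := Finset.mem_coe.1 hz
        have hw' := Finset.mem_coe.1 hw
        rw [Finset.mem_erase, Finset.mem_Icc] at hz' hw'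
        have hzlt : ∀ u, u ≠ (S.image Prod.fst).min' hRSne → u ∈ S.image Prod.fst →
            (S.image Prod.fst).min' hRSne < u := by
          intro u hu1 hu2
          have := (S.image Prod.fst).min'_le u hu2
          omega
        simp only [] at he
        by_cases hzR : z ∈ S.image Prod.fst <;> by_cases hwR : w ∈ S.image Prod.fst
        · rw [if_pos hzR, if_pos hwR] at he
          exact congrArg Prod.fst he
        · rw [if_pos hzR, if_neg hwR] at he
          have e1 : z = rmin S w := congrArg Prod.fst he
          have e2 : cmax S z = w := congrArg Prod.snd he
          exact (haux z w (hzlt z hz'.1 hzR) hz'.2.2 hzR hwR e1 e2.symm).elim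
        · rw [if_neg hzR, if_pos hwR] at he
          have e1 : w = rmin S z := (congrArg Prod.fst he).symm
          have e2 : cmax S w = z := (congrArg Prod.snd he).symm
          exact (haux w z (hzlt w hw'.1 hwR) hw'.2.2 hwR hzR e1 e2.symm).elim
        · rw [if_neg hzR, if_neg hwR] at he
          exact congrArg Prod.snd he
      have hcard2 := Finset.card_le_card_of_injOn _ hmaps hinj
      have ha0m : (S.image Prod.fst).min' hRSne ∈ Finset.Icc 1 n := by
        rw [Finset.mem_Icc, ← hpae]
        exact ⟨(hg.vn hpa).1, (hg.vn hpa).2.1⟩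
      rw [Finset.card_erase_of_mem ha0m, Nat.card_Icc] at hcard2
      omega
  · -- some value x in [1,n] is unused
    push_neg at hcov
    obtain ⟨x, hx1, hxn, hxR, hxC⟩ := hcov
    by_cases hup : ∃ p ∈ S, x < p.1
    · -- insert (x, c) where c is the max column among rows > x
      obtain ⟨q0, hq0, hq0x⟩ := hup
      have hFne : ((S.filter (fun p => x < p.1)).image Prod.snd).Nonempty :=
        ⟨q0.2, Finset.mem_image_of_mem _ (Finset.mem_filter.2 ⟨hq0, hq0x⟩)⟩
      obtain ⟨q, hq', hqe⟩ := Finset.mem_image.1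
        (((S.filter (fun p => x < p.1)).image Prod.snd).max'_mem hFne)
      rw [Finset.mem_filter] at hq'
      obtain ⟨hq, hq1⟩ := hq'
      have hqmax : ∀ p ∈ S, x < p.1 → p.2 ≤ q.2 := by
        intro p hp hpx
        rw [hqe]
        exact Finset.le_max' _ _ (Finset.mem_image_of_mem _ (Finset.mem_filter.2 ⟨hp, hpx⟩))
      have hxq2 : x ≠ q.2 := fun h => hxC (h ▸ Finset.mem_image_of_mem _ hq)
      have hvn : VnMem n (x, q.2) :=
        vn_mk hx1 hxn (hg.vn hq).2.2.1 (hg.vn hq).2.2.2.1 hxq2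
      have hcmp : ∀ p ∈ S, compat (x, q.2) p := by
        intro p hp
        apply compat_mk_left
        have hr1 := hg.rc_ne hp hq    -- p.1 ≠ q.2
        have hxp1 : x ≠ p.1 := fun h => hxR (h ▸ Finset.mem_image_of_mem _ hp)
        have hxp2 : x ≠ p.2 := fun h => hxC (h ▸ Finset.mem_image_of_mem _ hp)
        rcases lt_trichotomy x p.1 with h1 | h1 | h1
        · have := hqmax p hp h1
          omega
        · omega
        · -- p.1 < x < q.1 so q.2 ≤ p.2
          have := hg.col_le hp hq (by omega)
          omega
      have hmem := key (x, q.2) hvn hcmp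
      exact hxR (Finset.mem_image_of_mem _ hmem)
    · -- all rows are < x; insert (x, min column)
      push_neg at hup
      have hCne : (S.image Prod.snd).Nonempty := hne.image _
      obtain ⟨q, hq, hqe⟩ := Finset.mem_image.1 ((S.image Prod.snd).min'_mem hCne)
      have hqmin : ∀ p ∈ S, q.2 ≤ p.2 := by
        intro p hp
        rw [hqe]
        exact Finset.min'_le _ _ (Finset.mem_image_of_mem _ hp)
      have hxq2 : x ≠ q.2 := fun h => hxC (h ▸ Finset.mem_image_of_mem _ hq)
      have hvn : VnMem n (x, q.2) :=
        vn_mk hx1 hxn (hg.vn hq).2.2.1 (hg.vn hq).2.2.2.1 hxq2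
      have hcmp : ∀ p ∈ S, compat (x, q.2) p := by
        intro p hp
        apply compat_mk_left
        have hr1 := hg.rc_ne hp hq    -- p.1 ≠ q.2
        have hxp1 : x ≠ p.1 := fun h => hxR (h ▸ Finset.mem_image_of_mem _ hp)
        have hxp2 : x ≠ p.2 := fun h => hxC (h ▸ Finset.mem_image_of_mem _ hp)
        have hplt : p.1 ≤ x := hup p hp
        have := hqmin p hp
        omega
      have hmem := key (x, q.2) hvn hcmp
      exact hxR (Finset.mem_image_of_mem _ hmem)

theorem max_iff (hn : 2 ≤ n) :
    MaxSegreAdmissible n S ↔ SegreAdmissible n S ∧ S.card = n - 1 := by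
  constructor
  · rintro ⟨hadm, hmax⟩
    refine ⟨hadm, ?_⟩
    have hg := (adm_iff n S).1 hadm
    have hle := hg.card_le hn
    rcases eq_or_lt_of_le hle with he | hlt
    · exact he
    · obtain ⟨v, hvS, hgood⟩ := hg.exists_insert hn hlt
      have := hmax (insert v S) ((adm_iff n _).2 hgood) (Finset.subset_insert v S)
      exact absurd (this ▸ Finset.mem_insert_self v S) hvS
  · rintro ⟨hadm, hcard⟩
    refine ⟨hadm, ?_⟩
    intro T hT hsub
    have hg := (adm_iff n T).1 hT
    have hle := hg.card_le hn
    exact Finset.eq_of_subset_of_card_le hsub (by omega)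


/-! ### Rank functions and cell indexing -/

def rk (F : Finset ℕ) (x : ℕ) : ℕ := (F.filter (fun y => y ≤ x)).card

def rkT (F : Finset ℕ) (x : ℕ) : ℕ := (F.filter (fun y => x ≤ y)).card

lemma rk_pos {F : Finset ℕ} {x : ℕ} (hx : x ∈ F) : 1 ≤ rk F x := by
  rw [rk, Nat.succ_le_iff, Finset.card_pos]
  exact ⟨x, Finset.mem_filter.2 ⟨hx, le_refl x⟩⟩

lemma rk_le_card {F : Finset ℕ} {x : ℕ} : rk F x ≤ F.card :=
  Finset.card_le_card (Finset.filter_subset _ _)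

lemma rk_mono {F : Finset ℕ} {x y : ℕ} (h : x ≤ y) : rk F x ≤ rk F y := by
  apply Finset.card_le_card
  intro z hz
  rw [Finset.mem_filter] at hz ⊢
  exact ⟨hz.1, hz.2.trans h⟩

lemma rk_lt_rk {F : Finset ℕ} {x y : ℕ} (hy : y ∈ F) (h : x < y) :
    rk F x < rk F y := by
  apply Finset.card_lt_card
  rw [Finset.ssubset_iff_of_subset]
  · exact ⟨y, Finset.mem_filter.2 ⟨hy, le_refl y⟩, fun hc => by
      rw [Finset.mem_filter] at hc; omega⟩
  · intro z hz
    rw [Finset.mem_filter] at hz ⊢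
    exact ⟨hz.1, hz.2.trans h.le⟩

lemma rk_injOn {F : Finset ℕ} {x y : ℕ} (hx : x ∈ F) (hy : y ∈ F)
    (h : rk F x = rk F y) : x = y := by
  rcases lt_trichotomy x y with hc | hc | hc
  · exact absurd h (Nat.ne_of_lt (rk_lt_rk hy hc))
  · exact hc
  · exact absurd h.symm (Nat.ne_of_lt (rk_lt_rk hx hc))

lemma rkT_pos {F : Finset ℕ} {x : ℕ} (hx : x ∈ F) : 1 ≤ rkT F x := by
  rw [rkT, Nat.succ_le_iff, Finset.card_pos]
  exact ⟨x, Finset.mem_filter.2 ⟨hx, le_refl x⟩⟩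

lemma rkT_le_card {F : Finset ℕ} {x : ℕ} : rkT F x ≤ F.card :=
  Finset.card_le_card (Finset.filter_subset _ _)

lemma rkT_anti {F : Finset ℕ} {x y : ℕ} (h : x ≤ y) : rkT F y ≤ rkT F x := by
  apply Finset.card_le_card
  intro z hz
  rw [Finset.mem_filter] at hz ⊢
  exact ⟨hz.1, h.trans hz.2⟩

lemma rkT_lt_rkT {F : Finset ℕ} {x y : ℕ} (hx : x ∈ F) (h : x < y) :
    rkT F y < rkT F x := by
  apply Finset.card_lt_card
  rw [Finset.ssubset_iff_of_subset]
  · exact ⟨x, Finset.mem_filter.2 ⟨hx, le_refl x⟩, fun hc => by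
      rw [Finset.mem_filter] at hc; omega⟩
  · intro z hz
    rw [Finset.mem_filter] at hz ⊢
    exact ⟨hz.1, h.le.trans hz.2⟩

lemma rkT_injOn {F : Finset ℕ} {x y : ℕ} (hx : x ∈ F) (hy : y ∈ F)
    (h : rkT F x = rkT F y) : x = y := by
  rcases lt_trichotomy x y with hc | hc | hc
  · exact absurd h.symm (Nat.ne_of_lt (rkT_lt_rkT hx hc))
  · exact hc
  · exact absurd h (Nat.ne_of_lt (rkT_lt_rkT hy hc))

def rws (S : Finset (ℕ × ℕ)) : Finset ℕ := S.image Prod.fst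

def cls (S : Finset (ℕ × ℕ)) : Finset ℕ := S.image Prod.snd

def kap (S : Finset (ℕ × ℕ)) (p : ℕ × ℕ) : ℕ :=
  rk (rws S) p.1 + rkT (cls S) p.2

lemma mem_rws {p : ℕ × ℕ} (hp : p ∈ S) : p.1 ∈ rws S :=
  Finset.mem_image_of_mem _ hp

lemma mem_cls {p : ℕ × ℕ} (hp : p ∈ S) : p.2 ∈ cls S :=
  Finset.mem_image_of_mem _ hp

lemma good.kap_injOn (hg : good n S) {p q : ℕ × ℕ} (hp : p ∈ S) (hq : q ∈ S)
    (h : kap S p = kap S q) : p = q := by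
  rcases lt_trichotomy p.1 q.1 with hc | hc | hc
  · have h1 : rk (rws S) p.1 < rk (rws S) q.1 :=
      rk_lt_rk (Finset.mem_image_of_mem _ hq) hc
    have h2 : q.2 ≤ p.2 := hg.col_le hp hq hc
    have h3 : rkT (cls S) p.2 ≤ rkT (cls S) q.2 := rkT_anti h2
    simp only [kap] at h
    omega
  · have h2 : rkT (cls S) p.2 = rkT (cls S) q.2 := by
      rw [kap, kap, hc] at h
      omega
    have := rkT_injOn (mem_cls hp) (mem_cls hq) h2
    exact Prod.ext hc this
  · have h1 : rk (rws S) q.1 < rk (rws S) p.1 :=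
      rk_lt_rk (Finset.mem_image_of_mem _ hp) hc
    have h2 : p.2 ≤ q.2 := hg.col_le hq hp hc
    have h3 : rkT (cls S) q.2 ≤ rkT (cls S) p.2 := rkT_anti h2
    simp only [kap] at h
    omega

/-- context: a maximal admissible set -/
lemma good.rc_disjoint (hg : good n S) : Disjoint (rws S) (cls S) := by
  rw [Finset.disjoint_left]
  intro x hx hx'
  obtain ⟨p, hp, hpe⟩ := Finset.mem_image.1 hx
  obtain ⟨q, hq, hqe⟩ := Finset.mem_image.1 hx'
  exact hg.rc_ne hp hq (hpe.trans hqe.symm)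

lemma good.rc_union (hg : good n S) (hn : 2 ≤ n) (hcard : S.card = n - 1) :
    rws S ∪ cls S = Finset.Icc 1 n := by
  apply Finset.Subset.antisymm
  · intro x hx
    rw [Finset.mem_Icc]
    rcases Finset.mem_union.1 hx with h | h
    · obtain ⟨p, hp, hpe⟩ := Finset.mem_image.1 h
      exact hpe ▸ ⟨(hg.vn hp).1, (hg.vn hp).2.1⟩
    · obtain ⟨p, hp, hpe⟩ := Finset.mem_image.1 h
      exact hpe ▸ ⟨(hg.vn hp).2.2.1, (hg.vn hp).2.2.2.1⟩
  · intro x hx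
    rw [Finset.mem_Icc] at hx
    exact Finset.mem_union.2 (hg.cover hn hcard hx.1 hx.2)

lemma good.rc_card (hg : good n S) (hn : 2 ≤ n) (hcard : S.card = n - 1) :
    (rws S).card + (cls S).card = n := by
  rw [← Finset.card_union_of_disjoint hg.rc_disjoint, hg.rc_union hn hcard,
    Nat.card_Icc]
  omega

lemma good.kap_image (hg : good n S) (hn : 2 ≤ n) (hcard : S.card = n - 1) :
    S.image (kap S) = Finset.Icc 2 n := by
  apply Finset.eq_of_subset_of_card_le
  · intro y hy
    obtain ⟨p, hp, hpe⟩ := Finset.mem_image.1 hy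
    rw [Finset.mem_Icc, ← hpe]
    have h1 : 1 ≤ rk (rws S) p.1 := rk_pos (mem_rws hp)
    have h2 : 1 ≤ rkT (cls S) p.2 := rkT_pos (mem_cls hp)
    have h3 : rk (rws S) p.1 ≤ (rws S).card := rk_le_card
    have h4 : rkT (cls S) p.2 ≤ (cls S).card := rkT_le_card
    have h5 := hg.rc_card hn hcard
    rw [kap]
    exact ⟨by omega, by omega⟩
  · rw [Nat.card_Icc, Finset.card_image_of_injOn (fun p hp q hq => hg.kap_injOn hp hq),
      hcard]
    omega

noncomputable def cellFn (S : Finset (ℕ × ℕ)) (j : ℕ) : ℕ × ℕ :=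
  if h : ∃ p ∈ S, kap S p = j + 2 then h.choose else (0, 0)

lemma good.cell_exists (hg : good n S) (hn : 2 ≤ n) (hcard : S.card = n - 1)
    {j : ℕ} (hj : j ≤ n - 2) : ∃ p ∈ S, kap S p = j + 2 := by
  have : j + 2 ∈ S.image (kap S) := by
    rw [hg.kap_image hn hcard, Finset.mem_Icc]
    omega
  obtain ⟨p, hp, hpe⟩ := Finset.mem_image.1 this
  exact ⟨p, hp, hpe⟩

lemma cellFn_spec {j : ℕ} (h : ∃ p ∈ S, kap S p = j + 2) :
    cellFn S j ∈ S ∧ kap S (cellFn S j) = j + 2 := by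
  rw [cellFn, dif_pos h]
  exact ⟨h.choose_spec.1, h.choose_spec.2⟩

lemma good.cellFn_mem (hg : good n S) (hn : 2 ≤ n) (hcard : S.card = n - 1)
    {j : ℕ} (hj : j ≤ n - 2) : cellFn S j ∈ S :=
  (cellFn_spec (hg.cell_exists hn hcard hj)).1

lemma good.cellFn_kap (hg : good n S) (hn : 2 ≤ n) (hcard : S.card = n - 1)
    {j : ℕ} (hj : j ≤ n - 2) : kap S (cellFn S j) = j + 2 :=
  (cellFn_spec (hg.cell_exists hn hcard hj)).2

lemma good.cellFn_unique (hg : good n S) (hn : 2 ≤ n) (hcard : S.card = n - 1)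
    {j : ℕ} {p : ℕ × ℕ} (hp : p ∈ S) (hk : kap S p = j + 2) :
    cellFn S j = p := by
  have hj : j ≤ n - 2 := by
    have : kap S p ∈ Finset.Icc 2 n := by
      rw [← hg.kap_image hn hcard]
      exact Finset.mem_image_of_mem _ hp
    rw [Finset.mem_Icc] at this
    omega
  exact hg.kap_injOn (hg.cellFn_mem hn hcard hj) hp (by rw [hg.cellFn_kap hn hcard hj, hk])

lemma good.cellFn_surj (hg : good n S) (hn : 2 ≤ n) (hcard : S.card = n - 1)
    {p : ℕ × ℕ} (hp : p ∈ S) : ∃ j ≤ n - 2, cellFn S j = p := by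
  have hmem : kap S p ∈ Finset.Icc 2 n := by
    rw [← hg.kap_image hn hcard]
    exact Finset.mem_image_of_mem _ hp
  rw [Finset.mem_Icc] at hmem
  refine ⟨kap S p - 2, by omega, hg.cellFn_unique hn hcard hp (by omega)⟩

/-- the step lemma: consecutive cells share a row or a column -/
lemma good.step (hg : good n S) (hn : 2 ≤ n) (hcard : S.card = n - 1)
    {j : ℕ} (hj : j + 1 ≤ n - 2) :
    ((cellFn S (j + 1)).1 = (cellFn S j).1 ∧
      rkT (cls S) (cellFn S (j + 1)).2 = rkT (cls S) (cellFn S j).2 + 1) ∨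
    ((cellFn S (j + 1)).2 = (cellFn S j).2 ∧
      rk (rws S) (cellFn S (j + 1)).1 = rk (rws S) (cellFn S j).1 + 1) := by
  set q := cellFn S j with hqdef
  set p := cellFn S (j + 1) with hpdef
  have hqm : q ∈ S := hg.cellFn_mem hn hcard (by omega)
  have hpm : p ∈ S := hg.cellFn_mem hn hcard hj
  have hqk : kap S q = j + 2 := by
    rw [hqdef]; exact hg.cellFn_kap hn hcard (by omega)
  have hpk : kap S p = j + 3 := by
    rw [hpdef]
    have := hg.cellFn_kap hn hcard hj
    omega
  -- rows weakly increase
  have hrow : rk (rws S) q.1 ≤ rk (rws S) p.1 := by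
    by_contra hcon
    push_neg at hcon
    have h1 : p.1 < q.1 := by
      rcases lt_trichotomy p.1 q.1 with hc | hc | hc
      · exact hc
      · rw [hc] at hcon; omega
      · have : rk (rws S) q.1 < rk (rws S) p.1 := rk_lt_rk (mem_rws hpm) hc
        omega
    have h2 : q.2 ≤ p.2 := hg.col_le hpm hqm h1
    have h3 : rkT (cls S) p.2 ≤ rkT (cls S) q.2 := rkT_anti h2
    simp only [kap] at hpk hqk
    omega
  -- columns ranks weakly increase
  have hcol : rkT (cls S) q.2 ≤ rkT (cls S) p.2 := by
    by_contra hcon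
    push_neg at hcon
    have h1 : q.2 < p.2 := by
      rcases lt_trichotomy q.2 p.2 with hc | hc | hc
      · exact hc
      · rw [hc] at hcon; omega
      · have : rkT (cls S) q.2 < rkT (cls S) p.2 := rkT_lt_rkT (mem_cls hpm) hc
        omega
    -- q.2 < p.2 : compat analysis
    have hpq : p ≠ q := by
      intro he
      rw [he] at hpk
      omega
    rcases hg.2 p hpm q hqm with e | e | ⟨l1, l2, l3, l4⟩ | ⟨l1, l2, l3, l4⟩
    · simp only [kap, e] at hpk hqk
      omega
    · omega
    · have : rk (rws S) p.1 < rk (rws S) q.1 := rk_lt_rk (mem_rws hqm) l1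
      simp only [kap] at hpk hqk
      omega
    · omega
  simp only [kap] at hpk hqk
  rcases Nat.lt_or_ge (rk (rws S) q.1) (rk (rws S) p.1) with hc | hc
  · right
    have h1 : rkT (cls S) p.2 = rkT (cls S) q.2 := by omega
    have h2 := rkT_injOn (mem_cls hpm) (mem_cls hqm) h1
    exact ⟨h2, by omega⟩
  · left
    have h1 : rk (rws S) p.1 = rk (rws S) q.1 := by omega
    have h2 := rk_injOn (mem_rws hpm) (mem_rws hqm) h1
    exact ⟨h2, by omega⟩


def shareRow (S : Finset (ℕ × ℕ)) (j : ℕ) : Prop :=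
  (cellFn S (j + 1)).1 = (cellFn S j).1

noncomputable instance : DecidablePred (shareRow S) := fun _ => instDecidableEqNat _ _

lemma good.step_share (hg : good n S) (hn : 2 ≤ n) (hcard : S.card = n - 1)
    {j : ℕ} (hj : j + 1 ≤ n - 2) (hs : shareRow S j) :
    (cellFn S (j + 1)).1 = (cellFn S j).1 ∧
    (cellFn S (j + 1)).2 ≠ (cellFn S j).2 ∧
    rk (rws S) (cellFn S (j + 1)).1 = rk (rws S) (cellFn S j).1 ∧
    rkT (cls S) (cellFn S (j + 1)).2 = rkT (cls S) (cellFn S j).2 + 1 := by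
  have hj' : j ≤ n - 2 := by omega
  rcases hg.step hn hcard hj with ⟨h1, h2⟩ | ⟨h1, h2⟩
  · refine ⟨h1, ?_, by rw [h1], h2⟩
    intro he
    have := hg.kap_injOn (hg.cellFn_mem hn hcard hj)
      (hg.cellFn_mem hn hcard hj') (by rw [kap, kap, h1, he])
    have e1 := hg.cellFn_kap hn hcard hj
    have e2 := hg.cellFn_kap hn hcard hj'
    rw [this] at e1
    omega
  · exfalso
    have hne : (cellFn S (j + 1)).1 ≠ (cellFn S j).1 := by
      intro he
      rw [he] at h2
      omega
    exact hne hs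

lemma good.step_noshare (hg : good n S) (hn : 2 ≤ n) (hcard : S.card = n - 1)
    {j : ℕ} (hj : j + 1 ≤ n - 2) (hs : ¬ shareRow S j) :
    (cellFn S (j + 1)).2 = (cellFn S j).2 ∧
    rk (rws S) (cellFn S (j + 1)).1 = rk (rws S) (cellFn S j).1 + 1 ∧
    rkT (cls S) (cellFn S (j + 1)).2 = rkT (cls S) (cellFn S j).2 := by
  rcases hg.step hn hcard hj with ⟨h1, h2⟩ | ⟨h1, h2⟩
  · exact absurd h1 hs
  · exact ⟨h1, h2, by rw [h1]⟩

lemma good.rk_cell0 (hg : good n S) (hn : 2 ≤ n) (hcard : S.card = n - 1) :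
    rk (rws S) (cellFn S 0).1 = 1 ∧ rkT (cls S) (cellFn S 0).2 = 1 := by
  have hk := hg.cellFn_kap hn hcard (show 0 ≤ n - 2 by omega)
  have hm := hg.cellFn_mem hn hcard (show 0 ≤ n - 2 by omega)
  have h1 : 1 ≤ rk (rws S) (cellFn S 0).1 := rk_pos (mem_rws hm)
  have h2 : 1 ≤ rkT (cls S) (cellFn S 0).2 := rkT_pos (mem_cls hm)
  rw [kap] at hk
  omega

lemma good.rk_cell (hg : good n S) (hn : 2 ≤ n) (hcard : S.card = n - 1) :
    ∀ m, m ≤ n - 2 → rk (rws S) (cellFn S m).1 =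
      1 + ((Finset.range m).filter (fun j => ¬ shareRow S j)).card := by
  intro m
  induction m with
  | zero => intro _; simpa using (hg.rk_cell0 hn hcard).1
  | succ m ih =>
    intro hm
    have hm' : m ≤ n - 2 := by omega
    have hrec := ih hm'
    rw [Finset.range_add_one, Finset.filter_insert]
    by_cases hs : shareRow S m
    · rw [if_neg (by simpa using hs)]
      rw [← hrec]
      exact ((hg.step_share hn hcard hm hs).2.2.1)
    · rw [if_pos hs, Finset.card_insert_of_notMem (by simp)]
      have := (hg.step_noshare hn hcard hm hs).2.1
      omega

lemma good.rws_nonempty (hg : good n S) (hn : 2 ≤ n) (hcard : S.card = n - 1) :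
    (rws S).Nonempty := by
  have : S.Nonempty := by
    rw [← Finset.card_pos, hcard]; omega
  exact this.image _

lemma good.rk_last (hg : good n S) (hn : 2 ≤ n) (hcard : S.card = n - 1) :
    rk (rws S) (cellFn S (n - 2)).1 = (rws S).card := by
  have hRne := hg.rws_nonempty hn hcard
  obtain ⟨p, hp, hpe⟩ := Finset.mem_image.1 ((rws S).max'_mem hRne)
  obtain ⟨j0, hj0, hj0e⟩ := hg.cellFn_surj hn hcard hp
  have hrkmax : rk (rws S) p.1 = (rws S).card := by
    rw [rk]
    congr 1
    apply Finset.filter_true_of_mem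
    intro y hy
    rw [hpe]
    exact Finset.le_max' _ _ hy
  have h1 := hg.rk_cell hn hcard j0 hj0
  have h2 := hg.rk_cell hn hcard (n - 2) (le_refl _)
  have hmono : ((Finset.range j0).filter (fun j => ¬ shareRow S j)).card ≤
      ((Finset.range (n - 2)).filter (fun j => ¬ shareRow S j)).card := by
    apply Finset.card_le_card
    apply Finset.filter_subset_filter
    intro z hz
    rw [Finset.mem_range] at *
    omega
  have h3 : rk (rws S) (cellFn S (n - 2)).1 ≤ (rws S).card := rk_le_card
  rw [hj0e] at h1
  omega

lemma good.share_card (hg : good n S) (hn : 2 ≤ n) (hcard : S.card = n - 1) :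
    ((Finset.range (n - 2)).filter (fun j => shareRow S j)).card
      = n - 1 - (rws S).card := by
  have h1 := hg.rk_cell hn hcard (n - 2) (le_refl _)
  have h2 := hg.rk_last hn hcard
  have h3 := Finset.card_filter_add_card_filter_not
    (s := Finset.range (n - 2)) (p := fun j => shareRow S j)
  rw [Finset.card_range] at h3
  omega

lemma good.eq_image_cell (hg : good n S) (hn : 2 ≤ n) (hcard : S.card = n - 1) :
    S = (Finset.range (n - 1)).image (cellFn S) := by
  apply Finset.Subset.antisymm
  · intro p hp
    obtain ⟨j, hj, hje⟩ := hg.cellFn_surj hn hcard hp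
    exact Finset.mem_image.2 ⟨j, Finset.mem_range.2 (by omega), hje⟩
  · intro p hp
    obtain ⟨j, hj, hje⟩ := Finset.mem_image.1 hp
    rw [Finset.mem_range] at hj
    exact hje ▸ hg.cellFn_mem hn hcard (by omega)


/-! ### Sorted enumeration of a finite set of naturals -/

def nth (F : Finset ℕ) (i : ℕ) : ℕ := (F.sort (· ≤ ·)).getD i 0

lemma nth_mem {F : Finset ℕ} {i : ℕ} (h : i < F.card) : nth F i ∈ F := by
  have hl : i < (F.sort (· ≤ ·)).length := by rw [Finset.length_sort]; exact h
  rw [nth, List.getD_eq_getElem _ _ hl]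
  exact (Finset.mem_sort _).1 (List.getElem_mem hl)

lemma nth_lt {F : Finset ℕ} {i j : ℕ} (hij : i < j) (hj : j < F.card) :
    nth F i < nth F j := by
  have hl : j < (F.sort (· ≤ ·)).length := by rw [Finset.length_sort]; exact hj
  have hl' : i < (F.sort (· ≤ ·)).length := lt_trans (by omega) hl
  rw [nth, nth, List.getD_eq_getElem _ _ hl, List.getD_eq_getElem _ _ hl']
  exact List.pairwise_iff_getElem.1 (F.sortedLT_sort.pairwise) i j hl' hl hij

lemma nth_inj {F : Finset ℕ} {i j : ℕ} (hi : i < F.card) (hj : j < F.card)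
    (h : nth F i = nth F j) : i = j := by
  rcases lt_trichotomy i j with hc | hc | hc
  · exact absurd h (Nat.ne_of_lt (nth_lt hc hj))
  · exact hc
  · exact absurd h.symm (Nat.ne_of_lt (nth_lt hc hi))

lemma nth_surj {F : Finset ℕ} {x : ℕ} (hx : x ∈ F) :
    ∃ i < F.card, nth F i = x := by
  have : x ∈ F.sort (· ≤ ·) := (Finset.mem_sort _).2 hx
  obtain ⟨i, hi, he⟩ := List.mem_iff_getElem.1 this
  refine ⟨i, by rw [← Finset.length_sort (· ≤ ·)]; exact hi, ?_⟩
  rw [nth, List.getD_eq_getElem _ _ hi, he]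

lemma rk_nth {F : Finset ℕ} {i : ℕ} (h : i < F.card) :
    rk F (nth F i) = i + 1 := by
  rw [rk]
  have he : F.filter (fun y => y ≤ nth F i) = (Finset.range (i + 1)).image (nth F) := by
    apply Finset.Subset.antisymm
    · intro x hx
      rw [Finset.mem_filter] at hx
      obtain ⟨m, hm, hme⟩ := nth_surj hx.1
      refine Finset.mem_image.2 ⟨m, Finset.mem_range.2 ?_, hme⟩
      by_contra hcon
      have : nth F i < nth F m := nth_lt (by omega) hm
      omega
    · intro x hx
      obtain ⟨m, hm, hme⟩ := Finset.mem_image.1 hx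
      rw [Finset.mem_range] at hm
      have hm' : m < F.card := by omega
      rw [Finset.mem_filter, ← hme]
      refine ⟨nth_mem hm', ?_⟩
      rcases Nat.lt_or_ge m i with hc | hc
      · exact le_of_lt (nth_lt hc h)
      · have : m = i := by omega
        rw [this]
  rw [he, Finset.card_image_of_injOn, Finset.card_range]
  intro a ha b hb hab
  rw [Finset.mem_coe, Finset.mem_range] at ha hb
  exact nth_inj (by omega) (by omega) hab

lemma rk_add_rkT {F : Finset ℕ} {x : ℕ} (hx : x ∈ F) :
    rk F x + rkT F x = F.card + 1 := by
  have h1 : (F.filter (fun y => y ≤ x)) ∪ (F.filter (fun y => x ≤ y)) = F := by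
    apply Finset.Subset.antisymm
    · intro y hy
      rcases Finset.mem_union.1 hy with h | h <;> exact (Finset.mem_filter.1 h).1
    · intro y hy
      rcases le_total y x with h | h
      · exact Finset.mem_union.2 (Or.inl (Finset.mem_filter.2 ⟨hy, h⟩))
      · exact Finset.mem_union.2 (Or.inr (Finset.mem_filter.2 ⟨hy, h⟩))
  have h2 : (F.filter (fun y => y ≤ x)) ∩ (F.filter (fun y => x ≤ y)) = {x} := by
    apply Finset.Subset.antisymm
    · intro y hy
      rw [Finset.mem_inter, Finset.mem_filter, Finset.mem_filter] at hy
      rw [Finset.mem_singleton]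
      omega
    · intro y hy
      rw [Finset.mem_singleton] at hy
      subst hy
      exact Finset.mem_inter.2 ⟨Finset.mem_filter.2 ⟨hx, le_refl _⟩,
        Finset.mem_filter.2 ⟨hx, le_refl _⟩⟩
  have h3 := Finset.card_union_add_card_inter
    (F.filter (fun y => y ≤ x)) (F.filter (fun y => x ≤ y))
  rw [h1, h2, Finset.card_singleton] at h3
  rw [rk, rkT]
  omega

lemma rkT_nth {F : Finset ℕ} {i : ℕ} (h : i < F.card) :
    rkT F (nth F i) = F.card - i := by
  have h1 := rk_add_rkT (nth_mem h)
  have h2 := rk_nth h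
  omega


/-! ### Decoding a subset of `range (2n-2)` into a maximal admissible set -/

def Rset (n : ℕ) (T : Finset ℕ) : Finset ℕ :=
  (Finset.Icc 1 n).filter (fun x => x - 1 ∈ T)

def Cset (n : ℕ) (T : Finset ℕ) : Finset ℕ :=
  (Finset.Icc 1 n).filter (fun x => x - 1 ∉ T)

def AT (n : ℕ) (T : Finset ℕ) (j : ℕ) : ℕ :=
  ((Finset.range j).filter (fun i => (n + i) ∉ T)).card

def BT (n : ℕ) (T : Finset ℕ) (j : ℕ) : ℕ :=
  ((Finset.range j).filter (fun i => (n + i) ∈ T)).card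

def cellT (n : ℕ) (T : Finset ℕ) (j : ℕ) : ℕ × ℕ :=
  (nth (Rset n T) (AT n T j), nth (Cset n T) ((Cset n T).card - 1 - BT n T j))

def Dec (n : ℕ) (T : Finset ℕ) : Finset (ℕ × ℕ) :=
  (Finset.range (n - 1)).image (cellT n T)

section DecodeFacts

variable {n : ℕ} {T : Finset ℕ}

lemma Rset_Cset_disjoint : Disjoint (Rset n T) (Cset n T) := by
  rw [Finset.disjoint_left]
  intro x hx hx'
  rw [Rset, Finset.mem_filter] at hx
  rw [Cset, Finset.mem_filter] at hx'
  exact hx'.2 hx.2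

lemma Rset_union_Cset : Rset n T ∪ Cset n T = Finset.Icc 1 n := by
  apply Finset.Subset.antisymm
  · intro x hx
    rcases Finset.mem_union.1 hx with h | h
    · exact (Finset.mem_filter.1 h).1
    · exact (Finset.mem_filter.1 h).1
  · intro x hx
    by_cases h : x - 1 ∈ T
    · exact Finset.mem_union.2 (Or.inl (Finset.mem_filter.2 ⟨hx, h⟩))
    · exact Finset.mem_union.2 (Or.inr (Finset.mem_filter.2 ⟨hx, h⟩))

lemma Rset_card_add_Cset_card (hn : 2 ≤ n) :
    (Rset n T).card + (Cset n T).card = n := by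
  rw [← Finset.card_union_of_disjoint Rset_Cset_disjoint, Rset_union_Cset,
    Nat.card_Icc]
  omega

lemma ne_of_mem_Rset_Cset {x y : ℕ} (hx : x ∈ Rset n T) (hy : y ∈ Cset n T) :
    x ≠ y := by
  intro he
  exact absurd hx (fun h => (Finset.disjoint_left.1 Rset_Cset_disjoint h) (he ▸ hy))

lemma Rset_card_eq (hn : 2 ≤ n) : (Rset n T).card = (T.filter (fun y => y < n)).card := by
  apply Finset.card_bij (fun x _ => x - 1)
  · intro x hx
    rw [Rset, Finset.mem_filter, Finset.mem_Icc] at hx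
    rw [Finset.mem_filter]
    exact ⟨hx.2, by omega⟩
  · intro x hx y hy he
    rw [Rset, Finset.mem_filter, Finset.mem_Icc] at hx hy
    omega
  · intro y hy
    rw [Finset.mem_filter] at hy
    refine ⟨y + 1, ?_, by omega⟩
    rw [Rset, Finset.mem_filter, Finset.mem_Icc]
    refine ⟨⟨by omega, by omega⟩, by simpa using hy.1⟩

lemma filter_ge_card (hn : 2 ≤ n) (hs : T ⊆ Finset.range (2 * n - 2))
    (hc : T.card = n - 1) :
    (T.filter (fun y => ¬ y < n)).card = n - 1 - (Rset n T).card := by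
  have := Finset.card_filter_add_card_filter_not
    (s := T) (p := fun y => y < n)
  rw [hc] at this
  rw [← Rset_card_eq hn] at this
  omega

lemma Rset_card_pos (hn : 2 ≤ n) (hs : T ⊆ Finset.range (2 * n - 2))
    (hc : T.card = n - 1) : 1 ≤ (Rset n T).card := by
  have h1 := filter_ge_card hn hs hc
  have h2 : (T.filter (fun y => ¬ y < n)).card ≤ n - 2 := by
    have hsub : T.filter (fun y => ¬ y < n) ⊆ Finset.Icc n (2 * n - 3) := by
      intro y hy
      rw [Finset.mem_filter] at hy
      have := hs hy.1
      rw [Finset.mem_range] at this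
      rw [Finset.mem_Icc]
      omega
    have := Finset.card_le_card hsub
    rw [Nat.card_Icc] at this
    omega
  have h3 : (Rset n T).card ≤ n - 1 := by
    have := Finset.card_filter_add_card_filter_not
      (s := T) (p := fun y => y < n)
    rw [hc, ← Rset_card_eq hn] at this
    omega
  omega

lemma Rset_card_le (hn : 2 ≤ n) (hc : T.card = n - 1) :
    (Rset n T).card ≤ n - 1 := by
  have := Finset.card_filter_add_card_filter_not
    (s := T) (p := fun y => y < n)
  rw [hc, ← Rset_card_eq hn] at this
  omega

lemma Cset_card_pos (hn : 2 ≤ n) (hc : T.card = n - 1) :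
    1 ≤ (Cset n T).card := by
  have h1 := Rset_card_add_Cset_card (T := T) hn
  have h2 := Rset_card_le hn hc
  omega

lemma AT_add_BT (j : ℕ) : AT n T j + BT n T j = j := by
  rw [AT, BT]
  have h1 := Finset.card_filter_add_card_filter_not
    (s := Finset.range j) (p := fun i => (n + i) ∈ T)
  rw [Finset.card_range] at h1
  omega

lemma AT_mono {j j' : ℕ} (h : j ≤ j') : AT n T j ≤ AT n T j' :=
  Finset.card_le_card (Finset.filter_subset_filter _
    (Finset.range_subset_range.2 h))

lemma BT_mono {j j' : ℕ} (h : j ≤ j') : BT n T j ≤ BT n T j' :=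
  Finset.card_le_card (Finset.filter_subset_filter _
    (Finset.range_subset_range.2 h))

lemma AT_succ (j : ℕ) :
    AT n T (j + 1) = if (n + j) ∈ T then AT n T j else AT n T j + 1 := by
  by_cases h : (n + j) ∈ T
  · rw [if_pos h, AT, AT, Finset.range_add_one, Finset.filter_insert,
      if_neg (by simpa using h)]
  · rw [if_neg h, AT, AT, Finset.range_add_one, Finset.filter_insert, if_pos h,
      Finset.card_insert_of_notMem (by simp)]

lemma AT_succ_bound (j : ℕ) :
    AT n T j ≤ AT n T (j + 1) ∧ AT n T (j + 1) ≤ AT n T j + 1 := by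
  have h := AT_succ (n := n) (T := T) j
  split_ifs at h <;> omega

lemma BT_last (hn : 2 ≤ n) (hs : T ⊆ Finset.range (2 * n - 2))
    (hc : T.card = n - 1) : BT n T (n - 2) = n - 1 - (Rset n T).card := by
  rw [← filter_ge_card hn hs hc, BT]
  apply Finset.card_bij (fun i _ => n + i)
  · intro i hi
    rw [Finset.mem_filter, Finset.mem_range] at hi
    rw [Finset.mem_filter]
    exact ⟨hi.2, by omega⟩
  · intro i _ i' _ he
    omega
  · intro y hy
    rw [Finset.mem_filter] at hy
    have hr := hs hy.1
    rw [Finset.mem_range] at hr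
    refine ⟨y - n, ?_, by omega⟩
    rw [Finset.mem_filter, Finset.mem_range]
    constructor
    · omega
    · have : n + (y - n) = y := by omega
      rw [this]
      exact hy.1

lemma AT_last (hn : 2 ≤ n) (hs : T ⊆ Finset.range (2 * n - 2))
    (hc : T.card = n - 1) : AT n T (n - 2) = (Rset n T).card - 1 := by
  have h1 := AT_add_BT (n := n) (T := T) (n - 2)
  have h2 := BT_last hn hs hc
  have h3 := Rset_card_pos hn hs hc
  have h4 := Rset_card_le hn hc
  omega

lemma AT_le (hn : 2 ≤ n) (hs : T ⊆ Finset.range (2 * n - 2))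
    (hc : T.card = n - 1) {j : ℕ} (hj : j ≤ n - 2) :
    AT n T j ≤ (Rset n T).card - 1 := by
  have := AT_mono (n := n) (T := T) hj
  rw [AT_last hn hs hc] at this
  exact this

lemma BT_le (hn : 2 ≤ n) (hs : T ⊆ Finset.range (2 * n - 2))
    (hc : T.card = n - 1) {j : ℕ} (hj : j ≤ n - 2) :
    BT n T j ≤ (Cset n T).card - 1 := by
  have h1 := BT_mono (n := n) (T := T) hj
  rw [BT_last hn hs hc] at h1
  have h2 := Rset_card_add_Cset_card (T := T) hn
  have h3 := Rset_card_pos hn hs hc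
  omega

lemma cellT_row_mem (hn : 2 ≤ n) (hs : T ⊆ Finset.range (2 * n - 2))
    (hc : T.card = n - 1) {j : ℕ} (hj : j ≤ n - 2) :
    (cellT n T j).1 ∈ Rset n T := by
  apply nth_mem
  have h1 := AT_le hn hs hc hj
  have h2 := Rset_card_pos hn hs hc
  omega

lemma cellT_col_mem (hn : 2 ≤ n) (hs : T ⊆ Finset.range (2 * n - 2))
    (hc : T.card = n - 1) {j : ℕ} (hj : j ≤ n - 2) :
    (cellT n T j).2 ∈ Cset n T := by
  apply nth_mem
  have h2 := Cset_card_pos hn hc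
  omega

lemma Dec_good (hn : 2 ≤ n) (hs : T ⊆ Finset.range (2 * n - 2))
    (hc : T.card = n - 1) : good n (Dec n T) := by
  have hcell : ∀ p ∈ Dec n T, ∃ j ≤ n - 2, p = cellT n T j := by
    intro p hp
    obtain ⟨j, hj, hje⟩ := Finset.mem_image.1 hp
    rw [Finset.mem_range] at hj
    exact ⟨j, by omega, hje.symm⟩
  constructor
  · intro p hp
    obtain ⟨j, hj, rfl⟩ := hcell p hp
    have h1 := cellT_row_mem hn hs hc hj
    have h2 := cellT_col_mem hn hs hc hj
    rw [Rset, Finset.mem_filter, Finset.mem_Icc] at h1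
    rw [Cset, Finset.mem_filter, Finset.mem_Icc] at h2
    have h3 : (cellT n T j).1 ≠ (cellT n T j).2 :=
      ne_of_mem_Rset_Cset (cellT_row_mem hn hs hc hj) (cellT_col_mem hn hs hc hj)
    exact ⟨h1.1.1, h1.1.2, h2.1.1, h2.1.2, h3⟩
  · have key : ∀ j j', j ≤ n - 2 → j' ≤ n - 2 → j < j' →
        compat (cellT n T j) (cellT n T j') := by
      intro j j' hj hj' hjj
      have hA := AT_mono (n := n) (T := T) (le_of_lt hjj)
      have hB := BT_mono (n := n) (T := T) (le_of_lt hjj)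
      have hAB := AT_add_BT (n := n) (T := T) j
      have hAB' := AT_add_BT (n := n) (T := T) j'
      have hkR := Rset_card_pos hn hs hc
      have hkC := Cset_card_pos hn hc
      have hAle := AT_le hn hs hc hj'
      have hBle := BT_le hn hs hc hj'
      rcases Nat.eq_or_lt_of_le hA with he | hlt
      · left
        rw [cellT, cellT]
        simp only []
        rw [he]
      · rcases Nat.eq_or_lt_of_le hB with he' | hlt'
        · right; left
          rw [cellT, cellT]
          simp only []
          rw [he']
        · right; right; left
          have hr : (cellT n T j).1 < (cellT n T j').1 := by
            apply nth_lt hlt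
            omega
          have hcol : (cellT n T j').2 < (cellT n T j).2 := by
            apply nth_lt
            · omega
            · omega
          refine ⟨hr, hcol, ?_, ?_⟩
          · exact ne_of_mem_Rset_Cset (cellT_row_mem hn hs hc hj)
              (cellT_col_mem hn hs hc hj')
          · exact fun he => (ne_of_mem_Rset_Cset (cellT_row_mem hn hs hc hj')
              (cellT_col_mem hn hs hc hj)) he.symm
    intro p hp q hq
    obtain ⟨j, hj, rfl⟩ := hcell p hp
    obtain ⟨j', hj', rfl⟩ := hcell q hq
    rcases lt_trichotomy j j' with hc' | hc' | hc'
    · exact key j j' hj hj' hc'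
    · rw [hc']; exact compat_refl _
    · exact compat_symm (key j' j hj' hj hc')

lemma cellT_injOn (hn : 2 ≤ n) (hs : T ⊆ Finset.range (2 * n - 2))
    (hc : T.card = n - 1) {j j' : ℕ} (hj : j ≤ n - 2) (hj' : j' ≤ n - 2)
    (he : cellT n T j = cellT n T j') : j = j' := by
  have hkR := Rset_card_pos hn hs hc
  have hkC := Cset_card_pos hn hc
  have hA := AT_le hn hs hc hj
  have hA' := AT_le hn hs hc hj'
  have hB := BT_le hn hs hc hj
  have hB' := BT_le hn hs hc hj'
  have hAB := AT_add_BT (n := n) (T := T) j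
  have hAB' := AT_add_BT (n := n) (T := T) j'
  have h1 : AT n T j = AT n T j' :=
    nth_inj (by omega) (by omega) (congrArg Prod.fst he)
  have h2 : (Cset n T).card - 1 - BT n T j = (Cset n T).card - 1 - BT n T j' :=
    nth_inj (by omega) (by omega) (congrArg Prod.snd he)
  omega

lemma Dec_card (hn : 2 ≤ n) (hs : T ⊆ Finset.range (2 * n - 2))
    (hc : T.card = n - 1) : (Dec n T).card = n - 1 := by
  rw [Dec, Finset.card_image_of_injOn, Finset.card_range]
  intro j hj j' hj' he
  rw [Finset.mem_coe, Finset.mem_range] at hj hj'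
  exact cellT_injOn hn hs hc (by omega) (by omega) he

lemma nat_ivt {f : ℕ → ℕ} (h0 : f 0 = 0) (hstep : ∀ j, f (j + 1) ≤ f j + 1)
    {J m : ℕ} (hm : m ≤ f J) : ∃ j ≤ J, f j = m := by
  induction J with
  | zero => exact ⟨0, le_refl 0, by omega⟩
  | succ J ih =>
    rcases Nat.lt_or_ge (f J) m with hlt | hge
    · have := hstep J
      exact ⟨J + 1, le_refl _, by omega⟩
    · obtain ⟨j, hj, hje⟩ := ih hge
      exact ⟨j, by omega, hje⟩

lemma AT_zero : AT n T 0 = 0 := by simp [AT]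

lemma BT_zero : BT n T 0 = 0 := by simp [BT]

lemma rws_Dec (hn : 2 ≤ n) (hs : T ⊆ Finset.range (2 * n - 2))
    (hc : T.card = n - 1) : rws (Dec n T) = Rset n T := by
  apply Finset.Subset.antisymm
  · intro x hx
    obtain ⟨p, hp, hpe⟩ := Finset.mem_image.1 hx
    obtain ⟨j, hj, hje⟩ := Finset.mem_image.1 hp
    rw [Finset.mem_range] at hj
    rw [← hpe, ← hje]
    exact cellT_row_mem hn hs hc (by omega)
  · intro x hx
    obtain ⟨i, hi, hie⟩ := nth_surj hx
    have hile : i ≤ (Rset n T).card - 1 := by omega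
    have : ∃ j ≤ n - 2, AT n T j = i := by
      apply nat_ivt (AT_zero)
      · intro j
        rw [AT_succ]
        split_ifs <;> omega
      · rw [AT_last hn hs hc]
        exact hile
    obtain ⟨j, hj, hje⟩ := this
    refine Finset.mem_image.2 ⟨cellT n T j, ?_, ?_⟩
    · exact Finset.mem_image.2 ⟨j, Finset.mem_range.2 (by omega), rfl⟩
    · rw [cellT]
      simp only []
      rw [hje, hie]

lemma cls_Dec (hn : 2 ≤ n) (hs : T ⊆ Finset.range (2 * n - 2))
    (hc : T.card = n - 1) : cls (Dec n T) = Cset n T := by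
  apply Finset.Subset.antisymm
  · intro x hx
    obtain ⟨p, hp, hpe⟩ := Finset.mem_image.1 hx
    obtain ⟨j, hj, hje⟩ := Finset.mem_image.1 hp
    rw [Finset.mem_range] at hj
    rw [← hpe, ← hje]
    exact cellT_col_mem hn hs hc (by omega)
  · intro x hx
    obtain ⟨i, hi, hie⟩ := nth_surj hx
    have hkC := Cset_card_pos hn hc
    have : ∃ j ≤ n - 2, BT n T j = (Cset n T).card - 1 - i := by
      apply nat_ivt (BT_zero)
      · intro j
        have h1 := AT_succ_bound (n := n) (T := T) j
        have h2 := AT_add_BT (n := n) (T := T) j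
        have h3 := AT_add_BT (n := n) (T := T) (j + 1)
        omega
      · rw [BT_last hn hs hc]
        have := Rset_card_add_Cset_card (T := T) hn
        have := Rset_card_pos hn hs hc
        omega
    obtain ⟨j, hj, hje⟩ := this
    refine Finset.mem_image.2 ⟨cellT n T j, ?_, ?_⟩
    · exact Finset.mem_image.2 ⟨j, Finset.mem_range.2 (by omega), rfl⟩
    · rw [cellT]
      simp only []
      rw [hje]
      have : (Cset n T).card - 1 - ((Cset n T).card - 1 - i) = i := by omega
      rw [this, hie]

lemma kap_Dec (hn : 2 ≤ n) (hs : T ⊆ Finset.range (2 * n - 2))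
    (hc : T.card = n - 1) {j : ℕ} (hj : j ≤ n - 2) :
    kap (Dec n T) (cellT n T j) = j + 2 := by
  have hkR := Rset_card_pos hn hs hc
  have hkC := Cset_card_pos hn hc
  have hA := AT_le hn hs hc hj
  have hB := BT_le hn hs hc hj
  have hAB := AT_add_BT (n := n) (T := T) j
  rw [kap, rws_Dec hn hs hc, cls_Dec hn hs hc, cellT]
  simp only []
  rw [rk_nth (by omega), rkT_nth (by omega)]
  omega

lemma cellFn_Dec (hn : 2 ≤ n) (hs : T ⊆ Finset.range (2 * n - 2))
    (hc : T.card = n - 1) {j : ℕ} (hj : j ≤ n - 2) :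
    cellFn (Dec n T) j = cellT n T j := by
  apply (Dec_good hn hs hc).cellFn_unique hn (Dec_card hn hs hc)
  · exact Finset.mem_image.2 ⟨j, Finset.mem_range.2 (by omega), rfl⟩
  · exact kap_Dec hn hs hc hj

lemma shareRow_Dec (hn : 2 ≤ n) (hs : T ⊆ Finset.range (2 * n - 2))
    (hc : T.card = n - 1) {j : ℕ} (hj : j + 1 ≤ n - 2) :
    (shareRow (Dec n T) j ↔ (n + j) ∈ T) := by
  rw [shareRow, cellFn_Dec hn hs hc hj, cellFn_Dec hn hs hc (by omega)]
  have hkR := Rset_card_pos hn hs hc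
  have hA := AT_le hn hs hc hj
  have hA' := AT_le hn hs hc (show j ≤ n - 2 by omega)
  have hsucc := AT_succ (n := n) (T := T) j
  constructor
  · intro he
    have h1 : AT n T (j + 1) = AT n T j :=
      nth_inj (by omega) (by omega) he
    by_contra hcon
    rw [if_neg hcon] at hsucc
    omega
  · intro hmem
    rw [if_pos hmem] at hsucc
    rw [cellT, cellT]
    simp only []
    rw [hsucc]

end DecodeFacts


/-! ### Encoding and uniqueness -/

noncomputable def Enc (n : ℕ) (S : Finset (ℕ × ℕ)) : Finset ℕ :=
  ((rws S).image (fun x => x - 1)) ∪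
    (((Finset.range (n - 2)).filter (fun j => shareRow S j)).image (fun j => n + j))

lemma rws_bounds (hg : good n S) {x : ℕ} (hx : x ∈ rws S) : 1 ≤ x ∧ x ≤ n := by
  obtain ⟨p, hp, hpe⟩ := Finset.mem_image.1 hx
  exact hpe ▸ ⟨(hg.vn hp).1, (hg.vn hp).2.1⟩

lemma cls_bounds (hg : good n S) {x : ℕ} (hx : x ∈ cls S) : 1 ≤ x ∧ x ≤ n := by
  obtain ⟨p, hp, hpe⟩ := Finset.mem_image.1 hx
  exact hpe ▸ ⟨(hg.vn hp).2.2.1, (hg.vn hp).2.2.2.1⟩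

lemma Enc_subset (hg : good n S) (hn : 2 ≤ n) :
    Enc n S ⊆ Finset.range (2 * n - 2) := by
  intro x hx
  rw [Finset.mem_range]
  rcases Finset.mem_union.1 hx with h | h
  · obtain ⟨y, hy, hye⟩ := Finset.mem_image.1 h
    have := rws_bounds hg hy
    omega
  · obtain ⟨j, hj, hje⟩ := Finset.mem_image.1 h
    rw [Finset.mem_filter, Finset.mem_range] at hj
    omega

lemma Enc_card (hg : good n S) (hn : 2 ≤ n) (hcard : S.card = n - 1) :
    (Enc n S).card = n - 1 := by
  have hdisj : Disjoint ((rws S).image (fun x => x - 1))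
      (((Finset.range (n - 2)).filter (fun j => shareRow S j)).image (fun j => n + j)) := by
    rw [Finset.disjoint_left]
    intro x hx hx'
    obtain ⟨y, hy, hye⟩ := Finset.mem_image.1 hx
    obtain ⟨j, hj, hje⟩ := Finset.mem_image.1 hx'
    replace hye : y - 1 = x := hye
    replace hje : n + j = x := hje
    have := rws_bounds hg hy
    omega
  rw [Enc, Finset.card_union_of_disjoint hdisj]
  have h1 : ((rws S).image (fun x => x - 1)).card = (rws S).card := by
    apply Finset.card_image_of_injOn
    intro a ha b hb hab
    replace hab : a - 1 = b - 1 := hab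
    have h1 := rws_bounds hg (Finset.mem_coe.1 ha)
    have h2 := rws_bounds hg (Finset.mem_coe.1 hb)
    omega
  have h2 : (((Finset.range (n - 2)).filter (fun j => shareRow S j)).image
      (fun j => n + j)).card = n - 1 - (rws S).card := by
    rw [Finset.card_image_of_injOn (fun a _ b _ hab => by
      replace hab : n + a = n + b := hab
      omega)]
    exact hg.share_card hn hcard
  have h3 : (rws S).card + (cls S).card = n := hg.rc_card hn hcard
  have h4 : 1 ≤ (cls S).card := by
    rw [Nat.succ_le_iff, Finset.card_pos]
    have : S.Nonempty := by rw [← Finset.card_pos, hcard]; omega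
    exact this.image _
  have h5 : 1 ≤ (rws S).card := by
    rw [Nat.succ_le_iff, Finset.card_pos]
    have : S.Nonempty := by rw [← Finset.card_pos, hcard]; omega
    exact this.image _
  rw [h1, h2]
  omega

lemma Rset_Enc (hg : good n S) (hn : 2 ≤ n) : Rset n (Enc n S) = rws S := by
  apply Finset.Subset.antisymm
  · intro x hx
    rw [Rset, Finset.mem_filter, Finset.mem_Icc] at hx
    obtain ⟨⟨hx1, hx2⟩, hxu⟩ := hx
    rcases Finset.mem_union.1 hxu with h | h
    · obtain ⟨y, hy, hye⟩ := Finset.mem_image.1 h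
      have hb := rws_bounds hg hy
      replace hye : y - 1 = x - 1 := hye
      have : y = x := by omega
      exact this ▸ hy
    · obtain ⟨j, hj, hje⟩ := Finset.mem_image.1 h
      rw [Finset.mem_filter, Finset.mem_range] at hj
      omega
  · intro x hx
    have hb := rws_bounds hg hx
    rw [Rset, Finset.mem_filter, Finset.mem_Icc]
    refine ⟨⟨hb.1, hb.2⟩, ?_⟩
    exact Finset.mem_union.2 (Or.inl (Finset.mem_image.2 ⟨x, hx, rfl⟩))

lemma cls_eq_sdiff (hg : good n S) (hn : 2 ≤ n) (hcard : S.card = n - 1) :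
    cls S = (Finset.Icc 1 n) \ rws S := by
  apply Finset.Subset.antisymm
  · intro x hx
    have hb := cls_bounds hg hx
    rw [Finset.mem_sdiff, Finset.mem_Icc]
    refine ⟨⟨hb.1, hb.2⟩, ?_⟩
    intro hcon
    exact (Finset.disjoint_left.1 hg.rc_disjoint hcon) hx
  · intro x hx
    rw [Finset.mem_sdiff, Finset.mem_Icc] at hx
    rcases hg.cover hn hcard hx.1.1 hx.1.2 with h | h
    · exact absurd h hx.2
    · exact h

lemma Cset_eq_sdiff : Cset n T = (Finset.Icc 1 n) \ Rset n T := by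
  apply Finset.Subset.antisymm
  · intro x hx
    rw [Cset, Finset.mem_filter] at hx
    rw [Finset.mem_sdiff]
    refine ⟨hx.1, fun hcon => ?_⟩
    rw [Rset, Finset.mem_filter] at hcon
    exact hx.2 hcon.2
  · intro x hx
    rw [Finset.mem_sdiff] at hx
    rw [Cset, Finset.mem_filter]
    refine ⟨hx.1, fun hcon => ?_⟩
    exact hx.2 (Finset.mem_filter.2 ⟨hx.1, hcon⟩)

lemma Cset_Enc (hg : good n S) (hn : 2 ≤ n) (hcard : S.card = n - 1) :
    Cset n (Enc n S) = cls S := by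
  rw [Cset_eq_sdiff, Rset_Enc hg hn, cls_eq_sdiff hg hn hcard]

lemma Enc_bit (hg : good n S) (hn : 2 ≤ n) {j : ℕ} (hj : j < n - 2) :
    ((n + j) ∈ Enc n S ↔ shareRow S j) := by
  constructor
  · intro h
    rcases Finset.mem_union.1 h with h' | h'
    · obtain ⟨y, hy, hye⟩ := Finset.mem_image.1 h'
      have := rws_bounds hg hy
      omega
    · obtain ⟨j', hj', hje⟩ := Finset.mem_image.1 h'
      rw [Finset.mem_filter] at hj'
      have : j' = j := by omega
      exact this ▸ hj'.2
  · intro h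
    refine Finset.mem_union.2 (Or.inr (Finset.mem_image.2 ⟨j, ?_, rfl⟩))
    exact Finset.mem_filter.2 ⟨Finset.mem_range.2 hj, h⟩

lemma good.unique {S₁ S₂ : Finset (ℕ × ℕ)} (hg1 : good n S₁) (hg2 : good n S₂)
    (hn : 2 ≤ n) (hc1 : S₁.card = n - 1) (hc2 : S₂.card = n - 1)
    (hrw : rws S₁ = rws S₂) (hcl : cls S₁ = cls S₂)
    (hsh : ∀ j, j + 1 ≤ n - 2 → (shareRow S₁ j ↔ shareRow S₂ j)) :
    S₁ = S₂ := by
  have hcell : ∀ j, j ≤ n - 2 → cellFn S₁ j = cellFn S₂ j := by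
    intro j
    induction j with
    | zero =>
      intro hj
      have h10 := hg1.rk_cell0 hn hc1
      have h20 := hg2.rk_cell0 hn hc2
      have hm1 := hg1.cellFn_mem hn hc1 hj
      have hm2 := hg2.cellFn_mem hn hc2 hj
      have hm2r : (cellFn S₂ 0).1 ∈ rws S₁ := by rw [hrw]; exact mem_rws hm2
      have hm2c : (cellFn S₂ 0).2 ∈ cls S₁ := by rw [hcl]; exact mem_cls hm2
      apply Prod.ext
      · apply rk_injOn (mem_rws hm1) hm2r
        rw [h10.1, hrw, h20.1]
      · apply rkT_injOn (mem_cls hm1) hm2c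
        rw [h10.2, hcl, h20.2]
    | succ j ih =>
      intro hj
      have hj' : j ≤ n - 2 := by omega
      have hprev := ih hj'
      have hm1 := hg1.cellFn_mem hn hc1 hj
      have hm2 := hg2.cellFn_mem hn hc2 hj
      have hm2r : (cellFn S₂ (j + 1)).1 ∈ rws S₁ := by rw [hrw]; exact mem_rws hm2
      have hm2c : (cellFn S₂ (j + 1)).2 ∈ cls S₁ := by rw [hcl]; exact mem_cls hm2
      by_cases hsr : shareRow S₁ j
      · have hsr2 : shareRow S₂ j := (hsh j hj).1 hsr
        have d1 := hg1.step_share hn hc1 hj hsr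
        have d2 := hg2.step_share hn hc2 hj hsr2
        apply Prod.ext
        · rw [d1.1, d2.1, hprev]
        · apply rkT_injOn (mem_cls hm1) hm2c
          rw [d1.2.2.2, hcl, d2.2.2.2, hprev]
      · have hsr2 : ¬ shareRow S₂ j := fun h => hsr ((hsh j hj).2 h)
        have d1 := hg1.step_noshare hn hc1 hj hsr
        have d2 := hg2.step_noshare hn hc2 hj hsr2
        apply Prod.ext
        · apply rk_injOn (mem_rws hm1) hm2r
          rw [d1.2.1, hrw, d2.2.1, hprev]
        · rw [d1.1, d2.1, hprev]
  rw [hg1.eq_image_cell hn hc1, hg2.eq_image_cell hn hc2]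
  apply Finset.image_congr
  intro j hj
  rw [Finset.mem_coe, Finset.mem_range] at hj
  exact hcell j (by omega)

lemma good.dec_enc (hg : good n S) (hn : 2 ≤ n) (hcard : S.card = n - 1) :
    Dec n (Enc n S) = S := by
  have hs := Enc_subset hg hn
  have hc := Enc_card hg hn hcard
  apply (Dec_good hn hs hc).unique hg hn (Dec_card hn hs hc) hcard
  · rw [rws_Dec hn hs hc, Rset_Enc hg hn]
  · rw [cls_Dec hn hs hc, Cset_Enc hg hn hcard]
  · intro j hj
    rw [shareRow_Dec hn hs hc hj, Enc_bit hg hn (show j < n - 2 by omega)]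

lemma mem_T_iff_Rset {x : ℕ} (hx : x < n) : x ∈ T ↔ x + 1 ∈ Rset n T := by
  rw [Rset, Finset.mem_filter, Finset.mem_Icc, Nat.add_sub_cancel]
  constructor
  · intro h
    exact ⟨⟨by omega, by omega⟩, h⟩
  · intro h
    exact h.2

lemma Dec_inj (hn : 2 ≤ n) {T₁ T₂ : Finset ℕ}
    (hs₁ : T₁ ⊆ Finset.range (2 * n - 2)) (hc₁ : T₁.card = n - 1)
    (hs₂ : T₂ ⊆ Finset.range (2 * n - 2)) (hc₂ : T₂.card = n - 1)
    (he : Dec n T₁ = Dec n T₂) : T₁ = T₂ := by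
  have hR : Rset n T₁ = Rset n T₂ := by
    rw [← rws_Dec hn hs₁ hc₁, ← rws_Dec hn hs₂ hc₂, he]
  ext x
  by_cases hx : x < n
  · rw [mem_T_iff_Rset hx, mem_T_iff_Rset hx, hR]
  · constructor
    · intro h
      have hb := hs₁ h
      rw [Finset.mem_range] at hb
      have hj : (x - n) + 1 ≤ n - 2 := by omega
      have h1 := shareRow_Dec hn hs₁ hc₁ hj
      have h2 := shareRow_Dec hn hs₂ hc₂ hj
      have hxe : n + (x - n) = x := by omega
      rw [hxe] at h1 h2
      rw [← h2, ← he, h1]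
      exact h
    · intro h
      have hb := hs₂ h
      rw [Finset.mem_range] at hb
      have hj : (x - n) + 1 ≤ n - 2 := by omega
      have h1 := shareRow_Dec hn hs₁ hc₁ hj
      have h2 := shareRow_Dec hn hs₂ hc₂ hj
      have hxe : n + (x - n) = x := by omega
      rw [hxe] at h1 h2
      rw [← h1, he, h2]
      exact h

end SegreAux


/-- Every maximal admissible subset of `V_n` has exactly `n - 1` elements, and
the number of maximal admissible subsets of `V_n` is `C(2n-2, n-1)`. -/
theorem card_maxSegreAdmissible (n : ℕ) (hn : 2 ≤ n) :
    (∀ S, MaxSegreAdmissible n S → S.card = n - 1) ∧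
    {S : Finset (ℕ × ℕ) | MaxSegreAdmissible n S}.ncard
      = Nat.choose (2 * n - 2) (n - 1) := by
  constructor
  · intro S hS
    exact ((SegreAux.max_iff hn).1 hS).2
  · have hset : {S : Finset (ℕ × ℕ) | MaxSegreAdmissible n S} =
        ↑((Finset.powersetCard (n - 1) (Finset.range (2 * n - 2))).image
          (SegreAux.Dec n)) := by
      ext S
      simp only [Set.mem_setOf_eq, Finset.coe_image, Set.mem_image, Finset.mem_coe]
      constructor
      · intro hS
        obtain ⟨hadm, hcard⟩ := (SegreAux.max_iff hn).1 hS
        have hg := (SegreAux.adm_iff n S).1 hadm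
        exact ⟨SegreAux.Enc n S, Finset.mem_powersetCard.2
          ⟨SegreAux.Enc_subset hg hn, SegreAux.Enc_card hg hn hcard⟩,
          hg.dec_enc hn hcard⟩
      · rintro ⟨T, hT, rfl⟩
        obtain ⟨hs, hc⟩ := Finset.mem_powersetCard.1 hT
        exact (SegreAux.max_iff hn).2
          ⟨(SegreAux.adm_iff _ _).2 (SegreAux.Dec_good hn hs hc),
            SegreAux.Dec_card hn hs hc⟩
    rw [hset, Set.ncard_coe_finset, Finset.card_image_of_injOn,
      Finset.card_powersetCard, Finset.card_range]
    intro T₁ h₁ T₂ h₂ he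
    rw [Finset.mem_coe, Finset.mem_powersetCard] at h₁ h₂
    exact SegreAux.Dec_inj hn h₁.1 h₁.2 h₂.1 h₂.2 he
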